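/- Let q₁, …, q_k be independent random variables on a product probability space, and suppose y = c + Σ_{j=1}^k f_j(q_j) is an additive model with constant c and square-integrable mean-zero components f_j(q_j), and Var(y) > 0. If the first-order Sobol' index of input q_i vanishes, S_i = Var(E[y | q_i]) / Var(y) = 0, then f_i(q_i) = 0 almost surely; consequently y = c + Σ_{j≠i} f_j(q_j) almost surely, i.e. the output does not depend on q_i and the factor q_i may be fixed at any value without affecting the output. -/

import Mathlib

open MeasureTheory ProbabilityTheory

/-- The σ-algebra on a product space generated by the i-th coordinate. -/
def coordSigma {k : ℕ} {Ω : Fin k → Type*} [∀ i, MeasurableSpace (Ω i)] (i : Fin k) :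
    MeasurableSpace (∀ i, Ω i) :=
  MeasurableSpace.comap (fun ω => ω i) inferInstance

section Aux

variable {k : ℕ} {Ω : Fin k → Type*} [∀ i, MeasurableSpace (Ω i)]
  (μ : ∀ i, Measure (Ω i)) [∀ i, IsProbabilityMeasure (μ i)]

lemma pi_map_eval (i : Fin k) : (Measure.pi μ).map (fun ω => ω i) = μ i := by
  classical
  ext s hs
  rw [Measure.map_apply (measurable_pi_apply i) hs,
    show (fun ω : ∀ j, Ω j => ω i) ⁻¹' s
      = Set.pi Set.univ (Function.update (fun j => (Set.univ : Set (Ω j))) i s) from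
      Set.eval_preimage, Measure.pi_pi]
  refine (Finset.prod_eq_single i (fun j _ hj => ?_) (by simp)).trans (by simp)
  rw [Function.update_of_ne hj]
  simp

lemma measurePreserving_eval_pi (i : Fin k) :
    MeasurePreserving (fun ω : ∀ j, Ω j => ω i) (Measure.pi μ) (μ i) :=
  ⟨measurable_pi_apply i, pi_map_eval μ i⟩

lemma indep_coordSigma (i j : Fin k) (hij : j ≠ i) :
    Indep (coordSigma j) (coordSigma i) (Measure.pi μ) := by
  classical
  rw [Indep_iff]
  rintro t1 t2 ⟨s, hs, rfl⟩ ⟨t, ht, rfl⟩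
  have hmarg : ∀ (l : Fin k) (u : Set (Ω l)), MeasurableSet u →
      Measure.pi μ ((fun ω : ∀ m, Ω m => ω l) ⁻¹' u) = μ l u := by
    intro l u hu
    rw [← pi_map_eval μ l, Measure.map_apply (measurable_pi_apply l) hu]
  rw [hmarg j s hs, hmarg i t ht]
  have hset : ((fun ω : ∀ m, Ω m => ω j) ⁻¹' s) ∩ ((fun ω : ∀ m, Ω m => ω i) ⁻¹' t)
      = Set.pi Set.univ (fun l =>
          (Function.update (fun m => (Set.univ : Set (Ω m))) j s l) ∩
          (Function.update (fun m => (Set.univ : Set (Ω m))) i t l)) := by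
    rw [Set.pi_inter_distrib, ← Set.eval_preimage, ← Set.eval_preimage]
  rw [hset, Measure.pi_pi]
  have hterm : ∀ l : Fin k,
      μ l ((Function.update (fun m => (Set.univ : Set (Ω m))) j s l) ∩
        (Function.update (fun m => (Set.univ : Set (Ω m))) i t l))
      = (if l = j then μ j s else 1) * (if l = i then μ i t else 1) := by
    intro l
    rcases eq_or_ne l j with rfl | hlj
    · rw [Function.update_self, Function.update_of_ne hij]
      simp [hij]
    · rw [Function.update_of_ne hlj]
      rcases eq_or_ne l i with rfl | hli
      · rw [Function.update_self]
        simp [hlj]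
      · rw [Function.update_of_ne hli]
        simp [hlj, hli]
  simp_rw [hterm]
  rw [Finset.prod_mul_distrib]
  simp

end Aux

lemma variance_congr' {α : Type*} {_ : MeasurableSpace α} {μ : Measure α} {X Y : α → ℝ}
    (h : X =ᵐ[μ] Y) : variance X μ = variance Y μ := by
  have hm : μ[X] = μ[Y] := integral_congr_ae h
  unfold ProbabilityTheory.variance ProbabilityTheory.evariance
  rw [hm, lintegral_congr_ae (h.mono fun ω hω => by rw [hω])]

/-- Factor fixing for an additive model: if the first-order Sobol' index of input q_i
vanishes, then f_i(q_i) = 0 almost surely, hence y = c + Σ_{j≠i} f_j(q_j) almost surely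
and the output does not depend on q_i. -/
theorem additive_model_factor_fixing
    {k : ℕ} {Ω : Fin k → Type*} [∀ i, MeasurableSpace (Ω i)]
    (μ : ∀ i, Measure (Ω i)) [∀ i, IsProbabilityMeasure (μ i)]
    (c : ℝ) (f : ∀ i, Ω i → ℝ)
    (hmem : ∀ i, MemLp (f i) 2 (μ i))
    (hmean : ∀ i, ∫ t, f i t ∂(μ i) = 0)
    (y : (∀ i, Ω i) → ℝ) (hy : y = fun ω => c + ∑ i, f i (ω i))
    (hvar : 0 < variance y (Measure.pi μ)) (i : Fin k)
    (hSi : variance ((Measure.pi μ)[y|coordSigma i]) (Measure.pi μ) /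
        variance y (Measure.pi μ) = 0) :
    (fun ω : ∀ i, Ω i => f i (ω i)) =ᵐ[Measure.pi μ] 0 ∧
    y =ᵐ[Measure.pi μ] fun ω => c + ∑ j ∈ Finset.univ.erase i, f j (ω j) := by
  classical
  set π : Measure (∀ j, Ω j) := Measure.pi μ with hπ
  have hle : coordSigma i ≤ (by infer_instance : MeasurableSpace (∀ j, Ω j)) :=
    (measurable_pi_apply i).comap_le
  haveI : IsFiniteMeasure (π.trim hle) := isFiniteMeasure_trim hle
  -- measurable versions of the f j
  set g : ∀ j, Ω j → ℝ := fun j => (hmem j).1.mk (f j) with hgdef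
  have hgsm : ∀ j, StronglyMeasurable (g j) := fun j => (hmem j).1.stronglyMeasurable_mk
  have hfg : ∀ j, f j =ᵐ[μ j] g j := fun j => (hmem j).1.ae_eq_mk
  have hgmem : ∀ j, MemLp (g j) 2 (μ j) := fun j => (hmem j).ae_eq (hfg j)
  have hgmean : ∀ j, ∫ t, g j t ∂(μ j) = 0 := fun j =>
    (integral_congr_ae (hfg j).symm).trans (hmean j)
  have hmp : ∀ j, MeasurePreserving (fun ω : ∀ l, Ω l => ω j) π (μ j) :=
    fun j => measurePreserving_eval_pi μ j
  have hfg' : ∀ j, (fun ω : ∀ l, Ω l => f j (ω j)) =ᵐ[π] fun ω => g j (ω j) :=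
    fun j => (hfg j).comp_tendsto MeasureTheory.Measure.tendsto_eval_ae_ae
  have hGmem : ∀ j, MemLp (fun ω : ∀ l, Ω l => g j (ω j)) 2 π :=
    fun j => (hgmem j).comp_measurePreserving (hmp j)
  have hgint : ∀ j, Integrable (fun ω : ∀ l, Ω l => g j (ω j)) π :=
    fun j => (hGmem j).integrable one_le_two
  have hGsm : ∀ j, StronglyMeasurable (fun ω : ∀ l, Ω l => g j (ω j)) :=
    fun j => (hgsm j).comp_measurable (measurable_pi_apply j)
  have hint0 : ∀ j, ∫ ω, g j (ω j) ∂π = 0 := by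
    intro j
    have h1 : ∫ ω, g j (ω j) ∂π = ∫ t, g j t ∂(π.map (fun ω : ∀ l, Ω l => ω j)) := by
      rw [integral_map (measurable_pi_apply j).aemeasurable]
      rw [hπ, pi_map_eval μ j]
      exact (hgsm j).aestronglyMeasurable
    rw [h1, hπ, pi_map_eval μ j]
    exact hgmean j
  -- y is a.e. equal to its measurable version Y
  set Y : (∀ l, Ω l) → ℝ := fun ω => c + ∑ j, g j (ω j) with hYdef
  have hyY : y =ᵐ[π] Y := by
    have hall : ∀ᵐ ω ∂π, ∀ j, f j (ω j) = g j (ω j) := ae_all_iff.2 fun j => hfg' j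
    filter_upwards [hall] with ω hω
    rw [hy, hYdef]
    simp only
    rw [Finset.sum_congr rfl fun j _ => hω j]
  -- compute the conditional expectation
  have hcond : π[y|coordSigma i] =ᵐ[π] fun ω => c + g i (ω i) := by
    have h1 : π[y|coordSigma i] =ᵐ[π] π[Y|coordSigma i] := condExp_congr_ae hyY
    have h2 : π[Y|coordSigma i] =ᵐ[π]
        π[(fun _ => c)|coordSigma i] + π[(fun ω => ∑ j, g j (ω j))|coordSigma i] := by
      have : Y = (fun _ => c) + fun ω => ∑ j, g j (ω j) := rfl
      rw [this]
      exact condExp_add (integrable_const c) (integrable_finset_sum _ fun j _ => hgint j) (coordSigma i)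
    have h3 : π[(fun ω : ∀ l, Ω l => ∑ j, g j (ω j))|coordSigma i] =ᵐ[π]
        ∑ j, π[(fun ω : ∀ l, Ω l => g j (ω j))|coordSigma i] := by
      have : (fun ω : ∀ l, Ω l => ∑ j, g j (ω j))
          = ∑ j, fun ω : ∀ l, Ω l => g j (ω j) := by
        funext ω; simp
      rw [this]
      exact condExp_finset_sum (fun j _ => hgint j) (coordSigma i)
    have hi : π[(fun ω : ∀ l, Ω l => g i (ω i))|coordSigma i]
        = fun ω => g i (ω i) := by
      refine condExp_of_stronglyMeasurable hle ?_ (hgint i)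
      exact (hgsm i).comp_measurable (measurable_iff_comap_le.mpr le_rfl)
    have hj0 : ∀ j, j ≠ i → π[(fun ω : ∀ l, Ω l => g j (ω j))|coordSigma i]
        =ᵐ[π] fun _ => 0 := by
      intro j hj
      have hjle : coordSigma j ≤ (by infer_instance : MeasurableSpace (∀ l, Ω l)) :=
        (measurable_pi_apply j).comap_le
      have hsm : StronglyMeasurable[coordSigma j] (fun ω : ∀ l, Ω l => g j (ω j)) :=
        (hgsm j).comp_measurable (measurable_iff_comap_le.mpr le_rfl)
      have := condExp_indep_eq (μ := π) hjle hle hsm (indep_coordSigma μ i j hj)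
      rw [hint0 j] at this
      exact this
    have hall : ∀ᵐ ω ∂π, ∀ j, j ≠ i →
        (π[(fun ω : ∀ l, Ω l => g j (ω j))|coordSigma i]) ω = 0 := by
      rw [ae_all_iff]
      intro j
      by_cases hj : j = i
      · exact ae_of_all _ fun ω h => absurd hj h
      · filter_upwards [hj0 j hj] with ω hω _
        exact hω
    refine h1.trans (h2.trans ?_)
    filter_upwards [h3, hall] with ω h3ω hallω
    simp only [Pi.add_apply, condExp_const hle, Finset.sum_apply] at *
    rw [h3ω]
    congr 1
    rw [← Finset.add_sum_erase _ _ (Finset.mem_univ i), hi]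
    rw [Finset.sum_congr rfl fun j hj => hallω j (Finset.ne_of_mem_erase hj)]
    simp
  -- the Sobol' index being zero forces the conditional expectation to have zero variance
  have hnum : variance (π[y|coordSigma i]) π = 0 := by
    rcases div_eq_zero_iff.mp hSi with h | h
    · exact h
    · exact absurd h hvar.ne'
  have hXmem : MemLp (fun ω : ∀ l, Ω l => c + g i (ω i)) 2 π :=
    (memLp_const c).add (hGmem i)
  have hvz : variance (fun ω : ∀ l, Ω l => c + g i (ω i)) π = 0 :=
    (variance_congr' hcond.symm).trans hnum
  have hevz : evariance (fun ω : ∀ l, Ω l => c + g i (ω i)) π = 0 := by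
    have hlt := hXmem.evariance_lt_top
    rcases ENNReal.toReal_eq_zero_iff _ |>.mp hvz with h | h
    · exact h
    · exact absurd h hlt.ne
  have hmeanX : ∫ ω, (c + g i (ω i)) ∂π = c := by
    rw [integral_add (integrable_const c) (hgint i), hint0 i, integral_const]
    simp
  have hconst : (fun ω : ∀ l, Ω l => c + g i (ω i)) =ᵐ[π] fun _ => c := by
    have := (evariance_eq_zero_iff
      ((hGsm i).aemeasurable.const_add c)).mp hevz
    rw [hmeanX] at this
    exact this
  have hfi0 : (fun ω : ∀ l, Ω l => f i (ω i)) =ᵐ[π] 0 := by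
    filter_upwards [hconst, hfg' i] with ω h1 h2
    have : g i (ω i) = 0 := by linarith [h1]
    rw [Pi.zero_apply, h2, this]
  refine ⟨hfi0, ?_⟩
  filter_upwards [hfi0] with ω h0
  have hyω : y ω = c + ∑ j, f j (ω j) := by rw [hy]
  have hsplit := Finset.add_sum_erase Finset.univ (fun j => f j (ω j)) (Finset.mem_univ i)
  have h0' : f i (ω i) = 0 := h0
  rw [hyω, ← hsplit, h0', zero_add]
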